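/- Gauss' Test (convergence part): Let (a_n) be positive with a_{n+1}/a_n = 1 - β/n + γ(n)/n^{1+λ} for all n ≥ 1, where λ > 0, β > 1 is constant, and γ is a bounded sequence. Then ∑ a_n converges. -/

import Mathlib

open Filter Topology

theorem gauss_test_convergence (a : ℕ → ℝ) (ha : ∀ n, 0 < a n)
    (lam β : ℝ) (hlam : 0 < lam) (hβ : 1 < β) (γ : ℕ → ℝ)
    (hγ : ∃ C : ℝ, ∀ n, |γ n| ≤ C)
    (hratio : ∀ n : ℕ, 1 ≤ n →
      a (n + 1) / a n = 1 - β / n + γ n / (n : ℝ) ^ (1 + lam)) :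
    Summable a := by
  obtain ⟨C, hC⟩ := hγ
  set r : ℝ := (1 + β) / 2 with hr
  have hr1 : 1 < r := by rw [hr]; linarith
  have hrβ : r < β := by rw [hr]; linarith
  -- eventually C ≤ (β - r) * n ^ lam
  have htend : Tendsto (fun n : ℕ => (β - r) * (n : ℝ) ^ lam) atTop atTop := by
    apply Tendsto.const_mul_atTop (by linarith)
    exact (tendsto_rpow_atTop hlam).comp tendsto_natCast_atTop_atTop
  obtain ⟨N0, hN0⟩ := (htend.eventually_ge_atTop C).exists_forall_of_atTop
  set N := max N0 1 with hN
  have hN1 : 1 ≤ N := le_max_right _ _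
  -- key step inequality
  have key : ∀ n : ℕ, N ≤ n → a (n + 1) * ((n + 1 : ℕ) : ℝ) ^ r ≤ a n * (n : ℝ) ^ r := by
    intro n hn
    have hn1 : 1 ≤ n := le_trans hN1 hn
    have hnpos : (0 : ℝ) < n := by exact_mod_cast hn1
    have hratio' := hratio n hn1
    have hCn : C ≤ (β - r) * (n : ℝ) ^ lam := hN0 n (le_trans (le_max_left _ _) hn)
    -- a(n+1)/a n ≤ 1 - r/n
    have h1 : a (n + 1) / a n ≤ 1 - r / n := by
      rw [hratio']
      have hγn : γ n ≤ C := (abs_le.mp (hC n)).2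
      have hpow : (n : ℝ) ^ (1 + lam) = n * (n : ℝ) ^ lam := by
        rw [Real.rpow_add hnpos, Real.rpow_one]
      have hplpos : (0 : ℝ) < (n : ℝ) ^ lam := Real.rpow_pos_of_pos hnpos _
      rw [hpow]
      have : γ n / ((n : ℝ) * (n : ℝ) ^ lam) ≤ (β - r) / n := by
        rw [div_le_div_iff₀ (by positivity) hnpos]
        calc γ n * n ≤ ((β - r) * (n:ℝ)^lam) * n := by
              nlinarith [le_trans hγn hCn]
          _ = (β - r) * ((n:ℝ) * (n:ℝ)^lam) := by ring
      have h2 : 1 - β / n + γ n / ((n:ℝ) * (n:ℝ)^lam) ≤ 1 - β/n + (β - r)/n := by linarith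
      calc 1 - β / n + γ n / ((n:ℝ) * (n:ℝ)^lam) ≤ 1 - β/n + (β - r)/n := h2
        _ = 1 - r / n := by field_simp; ring
    -- 1 - r/(n+1) ≤ (n/(n+1))^r  (Bernoulli)
    have hn1pos : (0 : ℝ) < (n : ℝ) + 1 := by positivity
    have hB : 1 - r / ((n : ℝ) + 1) ≤ ((n : ℝ) / ((n : ℝ) + 1)) ^ r := by
      have hs : (-1 : ℝ) ≤ -(1 / ((n : ℝ) + 1)) := by
        rw [neg_le_neg_iff]
        rw [div_le_one hn1pos]; linarith
      have := one_add_mul_self_le_rpow_one_add hs hr1.le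
      have heq : (1 : ℝ) + -(1 / ((n : ℝ) + 1)) = (n : ℝ) / ((n : ℝ) + 1) := by
        field_simp
        ring
      rw [heq] at this
      calc 1 - r / ((n:ℝ)+1) = 1 + r * -(1/((n:ℝ)+1)) := by ring
        _ ≤ _ := this
    have h3 : a (n + 1) / a n ≤ ((n : ℝ) / ((n : ℝ) + 1)) ^ r := by
      calc a (n+1)/a n ≤ 1 - r / n := h1
        _ ≤ 1 - r / ((n:ℝ)+1) := by
            have : r / ((n:ℝ)+1) ≤ r / n := by
              apply div_le_div_of_nonneg_left (by linarith) hnpos (by linarith)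
            linarith
        _ ≤ _ := hB
    have hdivpow : ((n : ℝ) / ((n : ℝ) + 1)) ^ r = (n : ℝ) ^ r / ((n : ℝ) + 1) ^ r :=
      Real.div_rpow hnpos.le hn1pos.le r
    have hp1 : (0 : ℝ) < ((n : ℝ) + 1) ^ r := Real.rpow_pos_of_pos hn1pos _
    have := h3
    rw [div_le_iff₀ (ha n), hdivpow] at this
    push_cast
    calc a (n+1) * ((n:ℝ)+1) ^ r ≤ ((n:ℝ)^r / ((n:ℝ)+1)^r * a n) * ((n:ℝ)+1)^r := by
          nlinarith [hp1]
      _ = a n * (n:ℝ)^r := by field_simp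
  -- so a (N + m) * (N+m)^r ≤ a N * N^r
  have mono : ∀ m : ℕ, a (N + m) * ((N + m : ℕ) : ℝ) ^ r ≤ a N * (N : ℝ) ^ r := by
    intro m
    induction m with
    | zero => simp
    | succ k ih =>
      have := key (N + k) (Nat.le_add_right _ _)
      calc a (N + (k+1)) * ((N + (k+1) : ℕ) : ℝ) ^ r
          = a ((N + k) + 1) * (((N + k) + 1 : ℕ) : ℝ) ^ r := by ring_nf
        _ ≤ a (N + k) * ((N + k : ℕ) : ℝ) ^ r := this
        _ ≤ _ := ih
  -- summability
  rw [← summable_nat_add_iff N]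
  have hsum : Summable (fun m : ℕ => (a N * (N : ℝ) ^ r) * (((m + N : ℕ) : ℝ) ^ r)⁻¹) := by
    apply Summable.mul_left
    exact ((Real.summable_nat_rpow_inv.mpr hr1).comp_injective (add_left_injective N)).congr
      (fun m => by norm_num)
  apply hsum.of_nonneg_of_le (fun m => (ha _).le)
  intro m
  have hpos : (0 : ℝ) < ((m + N : ℕ) : ℝ) ^ r := by
    have : (0:ℝ) < ((m + N : ℕ) : ℝ) := by
      have : 1 ≤ m + N := le_add_of_le_right hN1 -- check
      exact_mod_cast Nat.lt_of_lt_of_le Nat.zero_lt_one this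
    exact Real.rpow_pos_of_pos this _
  have := mono m
  rw [Nat.add_comm N m] at this
  calc a (m + N) = a (m + N) * ((m + N : ℕ):ℝ)^r * (((m + N : ℕ):ℝ)^r)⁻¹ := by
        field_simp
    _ ≤ (a N * (N:ℝ)^r) * (((m + N : ℕ):ℝ)^r)⁻¹ := by
        apply mul_le_mul_of_nonneg_right this (inv_nonneg.mpr hpos.le)
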